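/- Let q ∈ (0,1/2) be irrational. Then for every integer j ≥ 1, the infinite sequence 1 0^{κ_j(q)} 11 0^{κ_{j+1}(q)} 11 0^{κ_{j+2}(q)} 11 ⋯ is strictly greater in the unimodal order than the infinite sequence 1 0^{κ_1(q)−1} 11 0^{κ_2(q)} 11 0^{κ_3(q)} 11 ⋯. -/

import Mathlib

set_option maxRecDepth 10000


open Set

/-- Binary sequences. -/
abbrev Bseq := ℕ → Fin 2

/-- The strict unimodal order on binary sequences: `α ≺ β` iff at the least index `r` where
they differ, the sum `∑_{i=0}^r α_i` is even. -/
def umLT (α β : Bseq) : Prop :=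
  ∃ r : ℕ, (∀ i, i < r → α i = β i) ∧ α r ≠ β r ∧
    Even (∑ i ∈ Finset.range (r + 1), ((α i : ℕ)))

/-- `α ⪯ β` in the unimodal order. -/
def umLE (α β : Bseq) : Prop := umLT α β ∨ α = β

/-- The `r`-fold shift `σ^r`. -/
def shiftSeq (r : ℕ) (α : Bseq) : Bseq := fun i => α (i + r)

/-- A sequence is maximal if all its shifts are `⪯` it. -/
def MaximalSeq (α : Bseq) : Prop := ∀ r : ℕ, umLE (shiftSeq r α) α

/-- Membership in `KS`: maximal sequences whose first two symbols are `10`. -/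
def KSseq (α : Bseq) : Prop := MaximalSeq α ∧ α 0 = 1 ∧ α 1 = 0

/-- A (purely) periodic sequence. -/
def PeriodicSeq (α : Bseq) : Prop := ∃ p : ℕ, 0 < p ∧ ∀ i, α (i + p) = α i

/-- The periodic sequence `W^∞` determined by a finite word `W`. -/
def perSeq (W : List (Fin 2)) : Bseq := fun i => W.getD (i % W.length) 0

/-- The sequence `V W^∞`. -/
def preperSeq (V W : List (Fin 2)) : Bseq :=
  fun i => if i < V.length then V.getD i 0 else perSeq W (i - V.length)

/-- The sequence `10 1^∞`. -/
def seq101 : Bseq := fun i => if i = 1 then 0 else 1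

/-- The sequence `1σ²(α)`: `1` followed by `α₂ α₃ ⋯`. -/
def oneShift2 (α : Bseq) : Bseq := fun i => if i = 0 then 1 else α (i + 1)

/-- `κ_i(q)`: `κ_1(q) = ⌊1/q⌋ - 1`, and `κ_i(q) = ⌊i/q⌋ - ⌊(i-1)/q⌋ - 2` for `i ≥ 2`. -/
noncomputable def kap (q : ℝ) (i : ℕ) : ℕ :=
  if i = 1 then (⌊1 / q⌋ - 1).toNat
  else (⌊(i : ℝ) / q⌋ - ⌊((i : ℝ) - 1) / q⌋ - 2).toNat

/-- The word `1 0^{κ_j(q)} 11 0^{κ_{j+1}(q)} 11 ⋯ 11 0^{κ_{j+M}(q)}`: an initial block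
indexed `j` followed by `M` further blocks. -/
noncomputable def tailBody (q : ℝ) (j M : ℕ) : List (Fin 2) :=
  1 :: (List.replicate (kap q j) 0 ++
    (((List.range M).map fun t => 1 :: 1 :: List.replicate (kap q (j + 1 + t)) 0).flatten))

/-- The word `c_q = 1 0^{κ_1(q)} 11 0^{κ_2(q)} 11 ⋯ 11 0^{κ_m(q)} 1`. -/
noncomputable def cqWord (q : ℝ) (m : ℕ) : List (Fin 2) := tailBody q 1 (m - 1) ++ [1]

/-- The word `w_q`, obtained from `c_q` by deleting its last two symbols. -/
noncomputable def wqWord (q : ℝ) (m : ℕ) : List (Fin 2) := (cqWord q m).dropLast.dropLast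

/-- The word `ŵ_q`, the reverse of `w_q`. -/
noncomputable def hwqWord (q : ℝ) (m : ℕ) : List (Fin 2) := (wqWord q m).reverse

/-- The finite word `1 0^{κ_j(q)} 11 0^{κ_{j+1}(q)} ⋯ 11 0^{κ_m(q)} 1`. -/
noncomputable def tailWord (q : ℝ) (j m : ℕ) : List (Fin 2) := tailBody q j (m - j) ++ [1]

/-- The word `1 0^{κ_1(q)-1} 11 0^{κ_2(q)} 11 ⋯` with `M` blocks after the first
(no closing `1`). -/
noncomputable def lowBody (q : ℝ) (M : ℕ) : List (Fin 2) :=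
  1 :: (List.replicate (kap q 1 - 1) 0 ++
    (((List.range M).map fun t => 1 :: 1 :: List.replicate (kap q (2 + t)) 0).flatten))

/-- The finite word `1 0^{κ_1(q)-1} 11 0^{κ_2(q)} ⋯ 11 0^{κ_m(q)} 1`. -/
noncomputable def lowWord (q : ℝ) (m : ℕ) : List (Fin 2) := lowBody q (m - 1) ++ [1]

/-- The infinite sequence `1 0^{κ_j(q)} 11 0^{κ_{j+1}(q)} 11 0^{κ_{j+2}(q)} 11 ⋯`. -/
noncomputable def tailSeq (q : ℝ) (j : ℕ) : Bseq := fun i => (tailBody q j (i + 1)).getD i 0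

/-- The infinite sequence `1 0^{κ_1(q)-1} 11 0^{κ_2(q)} 11 0^{κ_3(q)} 11 ⋯`. -/
noncomputable def lowSeq (q : ℝ) : Bseq := fun i => (lowBody q (i + 1)).getD i 0

/-- The height `q(α) = inf({q ∈ (0,1/2] ∩ ℚ : (c_q0)^∞ ≺ α} ∪ {1/2})`. -/
noncomputable def height (α : Bseq) : ℝ :=
  sInf ({x : ℝ | ∃ q : ℚ, x = (q : ℝ) ∧ 0 < q ∧ q ≤ 1 / 2 ∧
    umLT (perSeq (cqWord (q : ℝ) q.num.toNat ++ [0])) α} ∪ {1 / 2})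

/-- A unimodal map `f : [a,b] → [a,b]` with turning point `c`. -/
structure Unimodal (a b c : ℝ) (f : ℝ → ℝ) : Prop where
  a_lt_b : a < b
  c_mem : c ∈ Ioo a b
  cont : ContinuousOn f (Icc a b)
  maps : MapsTo f (Icc a b) (Icc a b)
  mono : StrictMonoOn f (Icc a c)
  anti : StrictAntiOn f (Icc c b)
  map_c : f c = b
  map_b : f b = a

/-- `α` is an itinerary of `x` under the unimodal map `f` with turning point `c`. -/
def IsItin (f : ℝ → ℝ) (a b c x : ℝ) (α : Bseq) : Prop :=
  ∀ r : ℕ, (α r = 0 → f^[r] x ∈ Icc a c) ∧ (α r = 1 → f^[r] x ∈ Icc c b)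

/-- `κ` is the kneading sequence of `f`: the itinerary of `b` smallest in the unimodal order. -/
def IsKneading (f : ℝ → ℝ) (a b c : ℝ) (κ : Bseq) : Prop :=
  IsItin f a b c b κ ∧ ∀ β : Bseq, IsItin f a b c b β → umLE κ β

/-- The standing convention on unimodal maps. -/
structure Convention (f : ℝ → ℝ) (a b c : ℝ) (κ : Bseq) : Prop where
  kneading : IsKneading f a b c κ
  gt101 : umLT seq101 κ
  itin_inj : ¬ PeriodicSeq κ → ∀ x ∈ Icc a b, ∀ y ∈ Icc a b, ∀ α : Bseq,
      IsItin f a b c x α → IsItin f a b c y α → x = y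
  two_fixed : ∀ n : ℕ, 0 < n → ∀ μ : Bseq,
      {x | x ∈ Icc a b ∧ f^[n] x = x ∧ IsItin f a b c x μ}.encard ≤ 2 ∧
      ∀ x ∈ {x | x ∈ Icc a b ∧ f^[n] x = x ∧ IsItin f a b c x μ},
        ∀ y ∈ {x | x ∈ Icc a b ∧ f^[n] x = x ∧ IsItin f a b c x μ},
          x ≠ y → ∃ r : ℕ, κ = shiftSeq r μ

lemma tailBody_succ (q : ℝ) (j M : ℕ) :
    tailBody q j (M+1) = (1 :: (List.replicate (kap q j) 0 ++ [1])) ++ tailBody q (j+1) M := by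
  have hmap : ((List.range M).map fun t => (1:Fin 2) :: 1 :: List.replicate (kap q (j + 1 + (t+1))) 0)
      = (List.range M).map (fun t => 1 :: 1 :: List.replicate (kap q ((j+1) + 1 + t)) 0) :=
    List.map_congr_left fun t _ => by rw [show j + 1 + (t+1) = j+1+1+t from by omega]
  simp only [tailBody, List.range_succ_eq_map, List.map_cons, List.map_map, List.flatten_cons,
    Function.comp_def, Nat.succ_eq_add_one, Nat.add_zero, hmap]
  simp [List.append_assoc]

lemma lowBody_succ (q : ℝ) (M : ℕ) :
    lowBody q (M+1) = (1 :: (List.replicate (kap q 1 - 1) 0 ++ [1])) ++ tailBody q 2 M := by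
  have hmap : ((List.range M).map fun t => (1:Fin 2) :: 1 :: List.replicate (kap q (2 + (t+1))) 0)
      = (List.range M).map (fun t => 1 :: 1 :: List.replicate (kap q (2 + 1 + t)) 0) :=
    List.map_congr_left fun t _ => by rw [show 2 + (t+1) = 2+1+t from by omega]
  simp only [lowBody, tailBody, List.range_succ_eq_map, List.map_cons, List.map_map,
    List.flatten_cons, Function.comp_def, Nat.succ_eq_add_one, Nat.add_zero, hmap]
  simp [List.append_assoc]

lemma tailBody_len (q : ℝ) : ∀ M j, M + M + 1 ≤ (tailBody q j M).length := by
  intro M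
  induction M with
  | zero => intro j; simp [tailBody]
  | succ M ih =>
    intro j
    rw [tailBody_succ]
    have := ih (j+1)
    simp only [List.length_append, List.length_cons, List.length_append, List.length_replicate]
    omega

lemma tailBody_prefix (q : ℝ) (j : ℕ) : ∀ M d, tailBody q j M <+: tailBody q j (M + d) := by
  intro M d
  refine ⟨(((List.range d).map fun t => 1 :: 1 :: List.replicate (kap q (j + 1 + (M + t))) 0).flatten), ?_⟩
  have h : ∀ t, j + 1 + (M + t) = j + 1 + (M + t) := fun _ => rfl
  simp only [tailBody, List.range_add, List.map_append, List.map_map, List.flatten_append,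
    Function.comp_def]
  simp [List.append_assoc]

lemma tailBody_getD (q : ℝ) (j M M' i : ℕ) (h : i < (tailBody q j M).length) (h' : M ≤ M') :
    (tailBody q j M').getD i 0 = (tailBody q j M).getD i 0 := by
  obtain ⟨d, rfl⟩ := Nat.exists_eq_add_of_le h'
  rw [List.getD_eq_getElem _ _ h, List.getD_eq_getElem _ _ (lt_of_lt_of_le h (tailBody_prefix q j M d).length_le)]
  exact ((tailBody_prefix q j M d).getElem h).symm

lemma tailSeq_stable (q : ℝ) (j M i : ℕ) (h : i < M) :
    tailSeq q j i = (tailBody q j M).getD i 0 := by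
  have hl : i < (tailBody q j (i+1)).length := lt_of_lt_of_le (by omega) (tailBody_len q (i+1) j)
  rw [tailSeq, ← tailBody_getD q j (i+1) M i hl h]

lemma lowBody_prefix (q : ℝ) : ∀ M d, lowBody q M <+: lowBody q (M + d) := by
  intro M d
  refine ⟨(((List.range d).map fun t => 1 :: 1 :: List.replicate (kap q (2 + (M + t))) 0).flatten), ?_⟩
  simp only [lowBody, List.range_add, List.map_append, List.map_map, List.flatten_append,
    Function.comp_def]
  simp [List.append_assoc]

lemma lowBody_len (q : ℝ) (M : ℕ) : M + M + 1 ≤ (lowBody q M).length := by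
  cases M with
  | zero => simp [lowBody]
  | succ M =>
    rw [lowBody_succ]
    have := tailBody_len q M 2
    simp only [List.length_append, List.length_cons, List.length_append, List.length_replicate]
    omega

lemma lowSeq_stable (q : ℝ) (M i : ℕ) (h : i < M) :
    lowSeq q i = (lowBody q M).getD i 0 := by
  have hl : i < (lowBody q (i+1)).length := lt_of_lt_of_le (by omega) (lowBody_len q (i+1))
  obtain ⟨d, rfl⟩ := Nat.exists_eq_add_of_le h
  rw [lowSeq]
  rw [List.getD_eq_getElem _ _ hl,
    List.getD_eq_getElem _ _ (lt_of_lt_of_le hl (lowBody_prefix q (i+1) d).length_le)]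
  exact ((lowBody_prefix q (i+1) d).getElem hl)

lemma tailSeq_zero' (q : ℝ) (j : ℕ) : tailSeq q j 0 = 1 := by
  simp [tailSeq, tailBody]

lemma tailSeq_zeros (q : ℝ) (j i : ℕ) (h1 : 1 ≤ i) (h2 : i ≤ kap q j) : tailSeq q j i = 0 := by
  obtain ⟨i, rfl⟩ : ∃ i', i = i'+1 := ⟨i-1, by omega⟩
  show (tailBody q j (i+1+1)).getD (i+1) 0 = 0
  simp only [tailBody, List.getD_cons_succ]
  rw [List.getD_append _ _ _ _ (by simp only [List.length_replicate]; omega),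
    List.getD_eq_getElem _ _ (by simp only [List.length_replicate]; omega)]
  simp

lemma getD_pref (K : ℕ) :
    ((1 :: (List.replicate K (0:Fin 2) ++ [1])).getD (K+1) 0 = 1) := by
  simp only [List.getD_cons_succ]
  rw [List.getD_append_right _ _ _ _ (by simp)]
  simp

lemma tailSeq_one (q : ℝ) (j : ℕ) : tailSeq q j (kap q j + 1) = 1 := by
  rw [tailSeq_stable q j (kap q j + 1+1) (kap q j + 1) (by omega), tailBody_succ]
  rw [List.getD_append _ _ _ _ (by simp)]
  exact getD_pref _

lemma tailSeq_shift (q : ℝ) (j i : ℕ) :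
    tailSeq q j (kap q j + 2 + i) = tailSeq q (j+1) i := by
  show (tailBody q j ((kap q j + 2 + i)+1)).getD (kap q j + 2 + i) 0 = _
  rw [tailBody_succ]
  rw [List.getD_append_right _ _ _ _ (by simp)]
  have hoff : kap q j + 2 + i - (1 :: (List.replicate (kap q j) (0:Fin 2) ++ [1])).length = i := by
    simp
  rw [hoff, ← tailSeq_stable q (j+1) (kap q j +2+i) i (by omega)]

lemma lowSeq_zero' (q : ℝ) : lowSeq q 0 = 1 := by simp [lowSeq, lowBody]

lemma lowSeq_zeros (q : ℝ) (i : ℕ) (h1 : 1 ≤ i) (h2 : i ≤ kap q 1 - 1) : lowSeq q i = 0 := by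
  obtain ⟨i, rfl⟩ : ∃ i', i = i'+1 := ⟨i-1, by omega⟩
  show (lowBody q (i+1+1)).getD (i+1) 0 = 0
  simp only [lowBody, List.getD_cons_succ]
  rw [List.getD_append _ _ _ _ (by simp only [List.length_replicate]; omega),
    List.getD_eq_getElem _ _ (by simp only [List.length_replicate]; omega)]
  simp

lemma lowSeq_one (q : ℝ) : lowSeq q (kap q 1 - 1 + 1) = 1 := by
  rw [lowSeq_stable q (kap q 1 - 1 +1+1) (kap q 1 - 1+1) (by omega), lowBody_succ]
  rw [List.getD_append _ _ _ _ (by simp)]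
  exact getD_pref _

lemma lowSeq_shift (q : ℝ) (i : ℕ) :
    lowSeq q (kap q 1 - 1 + 2 + i) = tailSeq q 2 i := by
  show (lowBody q ((kap q 1 - 1 + 2 + i)+1)).getD (kap q 1 - 1 + 2 + i) 0 = _
  rw [lowBody_succ]
  rw [List.getD_append_right _ _ _ _ (by simp)]
  have hoff : kap q 1 - 1 + 2 + i - (1 :: (List.replicate (kap q 1 - 1) (0:Fin 2) ++ [1])).length = i := by
    simp
  rw [hoff, ← tailSeq_stable q 2 (kap q 1 - 1 +2+i) i (by omega)]

noncomputable def wb (θ : ℝ) (n : ℕ) : ℤ := ⌊Int.fract ((n:ℝ)*θ) + Int.fract θ⌋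

lemma wb_mem (θ : ℝ) (n : ℕ) : wb θ n = 0 ∨ wb θ n = 1 := by
  have h1 : (0:ℝ) ≤ Int.fract ((n:ℝ)*θ) + Int.fract θ :=
    add_nonneg (Int.fract_nonneg _) (Int.fract_nonneg _)
  have h2 : Int.fract ((n:ℝ)*θ) + Int.fract θ < 2 := by
    have := Int.fract_lt_one ((n:ℝ)*θ); have := Int.fract_lt_one θ; linarith
  have ha : 0 ≤ wb θ n := Int.floor_nonneg.2 h1
  have hb : wb θ n < 2 := Int.floor_lt.2 (by exact_mod_cast h2)
  omega

lemma floor_succ_mul (θ : ℝ) (n : ℕ) :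
    ⌊((n:ℝ)+1)*θ⌋ = ⌊(n:ℝ)*θ⌋ + ⌊θ⌋ + wb θ n := by
  have h : ((n:ℝ)+1)*θ = ((⌊(n:ℝ)*θ⌋ + ⌊θ⌋ : ℤ) : ℝ) + (Int.fract ((n:ℝ)*θ) + Int.fract θ) := by
    rw [← Int.self_sub_floor ((n:ℝ)*θ), ← Int.self_sub_floor θ]
    push_cast
    ring
  rw [h, Int.floor_intCast_add]
  rfl

lemma fract_succ_mul (θ : ℝ) (n : ℕ) :
    Int.fract (((n:ℝ)+1)*θ) = Int.fract ((n:ℝ)*θ) + Int.fract θ - wb θ n := by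
  rw [← Int.self_sub_floor (((n:ℝ)+1)*θ), floor_succ_mul,
    ← Int.self_sub_floor ((n:ℝ)*θ), ← Int.self_sub_floor θ]
  push_cast
  ring

lemma fract_add_fract' (x y : ℝ) :
    Int.fract (x + y) = Int.fract (Int.fract x + Int.fract y) := by
  rw [Int.fract_eq_fract]
  exact ⟨⌊x⌋ + ⌊y⌋, by rw [← Int.self_sub_floor x, ← Int.self_sub_floor y]; push_cast; ring⟩

lemma fract_pos_of_irr (θ : ℝ) (hθ : Irrational θ) (n : ℕ) (hn : 1 ≤ n) :
    0 < Int.fract ((n:ℝ)*θ) := by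
  have hirr : Irrational ((n:ℝ)*θ) := hθ.natCast_mul (by omega)
  rw [Int.fract_pos]
  exact fun he => (Int.not_irrational ⌊(n:ℝ)*θ⌋) (he ▸ hirr)

lemma dense_step (θ : ℝ) (hθ : Irrational θ) (ε : ℝ) (hε : 0 < ε) (hε1 : ε < 1) :
    ∃ p : ℕ, 1 ≤ p ∧ (Int.fract ((p:ℝ)*θ) < ε ∨ 1 - ε < Int.fract ((p:ℝ)*θ)) := by
  have hdense : Dense ((AddSubgroup.closure {1, θ} : AddSubgroup ℝ) : Set ℝ) := by
    rcases AddSubgroup.dense_or_cyclic (AddSubgroup.closure {1, θ}) with h | ⟨a, ha⟩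
    · exact h
    · exfalso
      have h1 : (1:ℝ) ∈ AddSubgroup.closure ({1, θ} : Set ℝ) :=
        AddSubgroup.subset_closure (by simp)
      have h2 : θ ∈ AddSubgroup.closure ({1, θ} : Set ℝ) :=
        AddSubgroup.subset_closure (by simp)
      rw [ha, AddSubgroup.mem_closure_singleton] at h1 h2
      obtain ⟨m, hm⟩ := h1
      obtain ⟨k, hk⟩ := h2
      have hm0 : (m:ℝ) ≠ 0 := by
        intro h; rw [zsmul_eq_mul, h, zero_mul] at hm; exact one_ne_zero hm.symm
      have hm0' : (m:ℚ) ≠ 0 := by exact_mod_cast hm0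
      have hθeq : θ = (k:ℝ) / (m:ℝ) := by
        rw [zsmul_eq_mul] at hm hk
        rw [eq_div_iff hm0, ← hk, mul_assoc, mul_comm a (m:ℝ), hm, mul_one]
      exact (Rat.not_irrational ((k:ℚ)/(m:ℚ))) (by push_cast [hm0'] at hθeq ⊢; rwa [← hθeq])
  obtain ⟨g, hgS, hg0, hgε⟩ := dense_iff_exists_between.1 hdense 0 ε hε
  rw [SetLike.mem_coe, AddSubgroup.mem_closure_pair] at hgS
  obtain ⟨m, n, hmn⟩ := hgS
  simp only [zsmul_eq_mul, mul_one] at hmn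
  have hgself : Int.fract g = g := Int.fract_eq_self.2 ⟨le_of_lt hg0, lt_trans hgε hε1⟩
  have hn0 : n ≠ 0 := by
    rintro rfl
    rw [Int.cast_zero, zero_mul, add_zero] at hmn
    subst hmn
    have h01 : (0:ℝ) < m := hg0
    have : (1:ℝ) ≤ m := by exact_mod_cast (by exact_mod_cast h01 : (0:ℤ) < m)
    linarith
  rcases lt_or_gt_of_ne hn0 with hneg | hpos
  · refine ⟨(-n).toNat, by omega, Or.inr ?_⟩
    have h1 : ((-n).toNat : ℤ) = -n := Int.toNat_of_nonneg (by omega)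
    have hcast : (((-n).toNat : ℕ) : ℝ) = -(n:ℝ) := by exact_mod_cast congrArg (fun z : ℤ => (z:ℝ)) h1
    rw [hcast]
    have h2 : -(n:ℝ)*θ = (m:ℤ) + -g := by rw [← hmn]; push_cast; ring
    rw [h2, Int.fract_intCast_add, Int.fract_neg (by rw [hgself]; exact ne_of_gt hg0), hgself]
    linarith
  · refine ⟨n.toNat, by omega, Or.inl ?_⟩
    have h1 : (n.toNat : ℤ) = n := Int.toNat_of_nonneg (by omega)
    have hcast : ((n.toNat : ℕ) : ℝ) = (n:ℝ) := by exact_mod_cast congrArg (fun z : ℤ => (z:ℝ)) h1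
    rw [hcast]
    have h2 : (n:ℝ)*θ = (-m:ℤ) + g := by rw [← hmn]; push_cast; ring
    rw [h2, Int.fract_intCast_add, hgself]
    exact hgε

lemma dense_main (θ : ℝ) (hθ : Irrational θ) (δ : ℝ) (hδ : 0 < δ) (N : ℕ) :
    ∃ t : ℕ, 1 - δ < Int.fract ((↑(N + t) : ℝ) * θ) := by
  rcases le_or_gt 1 δ with hbig | hδ1
  · exact ⟨1, lt_of_le_of_lt (by linarith) (fract_pos_of_irr θ hθ (N+1) (by omega))⟩
  set ε := δ/2 with hε
  obtain ⟨p, hp1, hp⟩ := dense_step θ hθ ε (by linarith) (by linarith)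
  set η := Int.fract ((p:ℝ)*θ) with hη
  have hη0 : 0 < η := fract_pos_of_irr θ hθ p hp1
  have hη1 : η < 1 := Int.fract_lt_one _
  set f : ℕ → ℝ := fun i => Int.fract ((↑(N + i*p) : ℝ) * θ) with hf
  have hfrec : ∀ i, f (i+1) = Int.fract (f i + η) := by
    intro i
    have h1 : (↑(N + (i+1)*p) : ℝ) * θ = (↑(N + i*p) : ℝ) * θ + (p:ℝ)*θ := by push_cast; ring
    rw [hf]
    simp only
    rw [h1, fract_add_fract', hη]
  have hf0 : ∀ i, 0 ≤ f i := fun i => Int.fract_nonneg _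
  have hf1 : ∀ i, f i < 1 := fun i => Int.fract_lt_one _
  rcases hp with hsmall | hlarge
  · -- η < ε : climbing up
    by_contra hcon
    push_neg at hcon
    have hcon' : ∀ i, f i ≤ 1 - δ := fun i => hcon (i*p)
    have hstep : ∀ i, f (i+1) = f i + η := by
      intro i
      rw [hfrec i, Int.fract_eq_self.2 ⟨add_nonneg (hf0 i) (le_of_lt hη0), by
        have := hcon' i; linarith⟩]
    have hlin : ∀ i, f i = f 0 + i * η := by
      intro i
      induction i with
      | zero => simp
      | succ k ih => rw [hstep k, ih]; push_cast; ring
    obtain ⟨i, hi⟩ := exists_nat_gt (1/η)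
    have h2 : (1:ℝ) < i * η := (div_lt_iff₀ hη0).1 hi
    have := hlin i
    have := hcon' i
    have := hf0 0
    linarith
  · -- 1 - ε < η : descending, wrap gives the answer
    set s := 1 - η with hs
    have hs0 : 0 < s := by rw [hs]; linarith
    have hsε : s < ε := by rw [hs]; linarith
    have hwrap : ∀ i, f i < s → 1 - δ < f (i+1) := by
      intro i hi
      rw [hfrec i, Int.fract_eq_self.2 ⟨add_nonneg (hf0 i) (le_of_lt hη0), by rw [hs] at hi; linarith⟩]
      have := hf0 i
      linarith
    by_contra hcon
    push_neg at hcon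
    have hcon' : ∀ i, f i ≤ 1 - δ := fun i => hcon (i*p)
    have hnover : ∀ i, s ≤ f i := by
      intro i
      by_contra hlt
      push_neg at hlt
      exact absurd (hcon' (i+1)) (not_le.2 (hwrap i hlt))
    have hstep : ∀ i, f (i+1) = f i - s := by
      intro i
      have h1 : f i + η = (f i - s) + ((1:ℤ):ℝ) := by rw [hs]; push_cast; ring
      rw [hfrec i, h1, Int.fract_add_intCast, Int.fract_eq_self.2
        ⟨by linarith [hnover i], by linarith [hf1 i, hs0]⟩]
    have hlin : ∀ i, f i = f 0 - i * s := by
      intro i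
      induction i with
      | zero => simp
      | succ k ih => rw [hstep k, ih]; push_cast; ring
    obtain ⟨i, hi⟩ := exists_nat_gt (1/s)
    have h2 : (1:ℝ) < i * s := (div_lt_iff₀ hs0).1 hi
    have := hlin i
    have := hnover i
    have := hf1 0
    linarith

lemma kap_one_int {q : ℝ} (h0 : 0 < q) (h2 : q < 1/2) :
    (kap q 1 : ℤ) = ⌊1/q⌋ - 1 ∧ 1 ≤ kap q 1 := by
  have hθ2 : (2:ℝ) < 1/q := by rw [lt_div_iff₀ h0]; linarith
  have hfl2 : (2:ℤ) ≤ ⌊1/q⌋ := Int.le_floor.2 (by exact_mod_cast hθ2.le)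
  have h : kap q 1 = (⌊1/q⌋ - 1).toNat := by simp [kap]
  constructor
  · rw [h]; omega
  · rw [h]; omega

lemma kap_succ_int {q : ℝ} (h0 : 0 < q) (h2 : q < 1/2) (n : ℕ) (hn : 1 ≤ n) :
    (kap q (n+1) : ℤ) = ⌊1/q⌋ - 2 + wb (1/q) n := by
  have hθ2 : (2:ℝ) < 1/q := by rw [lt_div_iff₀ h0]; linarith
  have hfl2 : (2:ℤ) ≤ ⌊1/q⌋ := Int.le_floor.2 (by exact_mod_cast hθ2.le)
  have hne1 : n + 1 ≠ 1 := by omega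
  have h : kap q (n+1) = (⌊(↑(n+1) : ℝ)/q⌋ - ⌊((↑(n+1) : ℝ) - 1)/q⌋ - 2).toNat := by
    simp [kap, hne1, show n ≠ 0 by omega]
  have c1 : (↑(n+1) : ℝ)/q = ((n:ℝ)+1)*(1/q) := by push_cast; ring
  have c2 : ((↑(n+1) : ℝ) - 1)/q = (n:ℝ)*(1/q) := by push_cast; ring
  rw [c1, c2, floor_succ_mul (1/q) n] at h
  rcases wb_mem (1/q) n with hw | hw <;> rw [h] <;> omega

lemma exist_diff {q : ℝ} (h0 : 0 < q) (h2 : q < 1/2) (hirr : Irrational q)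
    (n m : ℕ) (hn : 1 ≤ n) (hm : 1 ≤ m)
    (hlt : Int.fract ((n:ℝ)*(1/q)) < Int.fract ((m:ℝ)*(1/q))) :
    ∃ T, kap q (n+1+T) ≠ kap q (m+1+T) := by
  have hθirr : Irrational (1/q) := by rw [one_div]; exact hirr.inv
  by_contra hcon
  push_neg at hcon
  set θ := 1/q with hθ
  set δ := Int.fract ((m:ℝ)*θ) - Int.fract ((n:ℝ)*θ) with hδdef
  have hδ : 0 < δ := by rw [hδdef]; linarith
  have hind : ∀ t, Int.fract ((↑(m+t):ℝ)*θ) - Int.fract ((↑(n+t):ℝ)*θ) = δ := by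
    intro t
    induction t with
    | zero => simp [hδdef]
    | succ k ih =>
      have hk1 : kap q (n+k+1) = kap q (m+k+1) := by
        have := hcon k
        have e1 : n+1+k = n+k+1 := by omega
        have e2 : m+1+k = m+k+1 := by omega
        rwa [e1, e2] at this
      have e1 := kap_succ_int h0 h2 (n+k) (by omega)
      have e2 := kap_succ_int h0 h2 (m+k) (by omega)
      have hwb : wb θ (n+k) = wb θ (m+k) := by
        have hc : (kap q (n+k+1) : ℤ) = (kap q (m+k+1) : ℤ) := by exact_mod_cast hk1
        rw [hθ]; omega
      have f1 := fract_succ_mul θ (n+k)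
      have f2 := fract_succ_mul θ (m+k)
      have c1 : (↑(n+(k+1)) : ℝ) = (↑(n+k):ℝ)+1 := by push_cast; ring
      have c2 : (↑(m+(k+1)) : ℝ) = (↑(m+k):ℝ)+1 := by push_cast; ring
      rw [c1, c2, f1, f2, hwb]
      push_cast at ih ⊢
      linarith
  obtain ⟨t, ht⟩ := dense_main θ hθirr δ hδ n
  have h1 := hind t
  have h2 := Int.fract_lt_one ((↑(m+t):ℝ)*θ)
  linarith

lemma sum_two (q : ℝ) (j : ℕ) :
    ∑ i ∈ Finset.range (kap q j + 2), ((tailSeq q j i : ℕ)) = 2 := by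
  have h : kap q j + 2 = (kap q j + 1) + 1 := rfl
  rw [h, Finset.sum_range_succ, Finset.sum_range_succ']
  have h1 : ∀ i ∈ Finset.range (kap q j), ((tailSeq q j (i+1) : ℕ)) = 0 := by
    intro i hi
    rw [tailSeq_zeros q j (i+1) (by omega) (by have := Finset.mem_range.1 hi; omega)]
    rfl
  rw [Finset.sum_congr rfl h1, tailSeq_zero', tailSeq_one]
  simp

lemma low_sum_two (q : ℝ) :
    ∑ i ∈ Finset.range ((kap q 1 - 1) + 2), ((lowSeq q i : ℕ)) = 2 := by
  have h : kap q 1 - 1 + 2 = (kap q 1 - 1 + 1) + 1 := rfl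
  rw [h, Finset.sum_range_succ, Finset.sum_range_succ']
  have h1 : ∀ i ∈ Finset.range (kap q 1 - 1), ((lowSeq q (i+1) : ℕ)) = 0 := by
    intro i hi
    rw [lowSeq_zeros q (i+1) (by omega) (by have := Finset.mem_range.1 hi; omega)]
    rfl
  rw [Finset.sum_congr rfl h1, lowSeq_zero', lowSeq_one]
  simp

def tailConc (q : ℝ) (n m : ℕ) : Prop :=
  ∃ r, (∀ i, i < r → tailSeq q (n+1) i = tailSeq q (m+1) i) ∧ tailSeq q (n+1) r = 1 ∧
    tailSeq q (m+1) r = 0 ∧ Even (∑ i ∈ Finset.range (r + 1), ((tailSeq q (n+1) i : ℕ)))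

lemma base_case {q : ℝ} (h0 : 0 < q) (h2 : q < 1/2) (n m : ℕ) (hn : 1 ≤ n) (hm : 1 ≤ m)
    (hlt : Int.fract ((n:ℝ)*(1/q)) < Int.fract ((m:ℝ)*(1/q)))
    (hne : kap q (n+1) ≠ kap q (m+1)) : tailConc q n m := by
  have e1 := kap_succ_int h0 h2 n hn
  have e2 := kap_succ_int h0 h2 m hm
  have hwble : wb (1/q) n ≤ wb (1/q) m := Int.floor_mono (by linarith)
  have hcne : (kap q (n+1) : ℤ) ≠ (kap q (m+1) : ℤ) := by exact_mod_cast hne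
  rcases wb_mem (1/q) n with hwn | hwn <;> rcases wb_mem (1/q) m with hwm | hwm
  all_goals try (exfalso; omega)
  have hkk : kap q (m+1) = kap q (n+1) + 1 := by omega
  refine ⟨kap q (n+1) + 1, ?_, tailSeq_one q (n+1), ?_, ?_⟩
  · intro i hi
    rcases Nat.eq_zero_or_pos i with rfl | ipos
    · rw [tailSeq_zero', tailSeq_zero']
    · rw [tailSeq_zeros q (n+1) i ipos (by omega), tailSeq_zeros q (m+1) i ipos (by omega)]
  · exact tailSeq_zeros q (m+1) _ (by omega) (by omega)
  · have h : kap q (n+1) + 1 + 1 = kap q (n+1) + 2 := rfl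
    rw [h, sum_two]
    exact even_two

lemma main_lemma {q : ℝ} (h0 : 0 < q) (h2 : q < 1/2) :
    ∀ T n m : ℕ, 1 ≤ n → 1 ≤ m → Int.fract ((n:ℝ)*(1/q)) < Int.fract ((m:ℝ)*(1/q)) →
    kap q (n+1+T) ≠ kap q (m+1+T) → tailConc q n m := by
  intro T
  induction T with
  | zero =>
    intro n m hn hm hlt hne
    exact base_case h0 h2 n m hn hm hlt (by simpa using hne)
  | succ T ih =>
    intro n m hn hm hlt hne
    by_cases heq : kap q (n+1) = kap q (m+1)
    · have e1 := kap_succ_int h0 h2 n hn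
      have e2 := kap_succ_int h0 h2 m hm
      have hceq : (kap q (n+1) : ℤ) = (kap q (m+1) : ℤ) := by exact_mod_cast heq
      have hwb : wb (1/q) n = wb (1/q) m := by omega
      have hlt' : Int.fract ((↑(n+1):ℝ)*(1/q)) < Int.fract ((↑(m+1):ℝ)*(1/q)) := by
        have f1 := fract_succ_mul (1/q) n
        have f2 := fract_succ_mul (1/q) m
        have c1 : (↑(n+1) : ℝ) = (n:ℝ)+1 := by push_cast; ring
        have c2 : (↑(m+1) : ℝ) = (m:ℝ)+1 := by push_cast; ring
        rw [c1, c2, f1, f2, hwb]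
        linarith
      have hne' : kap q ((n+1)+1+T) ≠ kap q ((m+1)+1+T) := by
        have a1 : (n+1)+1+T = n+1+(T+1) := by omega
        have a2 : (m+1)+1+T = m+1+(T+1) := by omega
        rw [a1, a2]; exact hne
      obtain ⟨r, hag, hv1, hv0, hev⟩ := ih (n+1) (m+1) (by omega) (by omega) hlt' hne'
      refine ⟨kap q (n+1) + 2 + r, ?_, ?_, ?_, ?_⟩
      · intro i hi
        rcases Nat.lt_or_ge i (kap q (n+1) + 2) with hsmall | hbig
        · rcases Nat.eq_zero_or_pos i with rfl | ipos
          · rw [tailSeq_zero', tailSeq_zero']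
          · rcases Nat.lt_or_ge i (kap q (n+1) + 1) with h' | h'
            · rw [tailSeq_zeros q (n+1) i ipos (by omega),
                tailSeq_zeros q (m+1) i ipos (by omega)]
            · have hieq : i = kap q (n+1) + 1 := by omega
              subst hieq
              rw [tailSeq_one, heq, tailSeq_one]
        · obtain ⟨i', rfl⟩ : ∃ i', i = kap q (n+1) + 2 + i' :=
            ⟨i - (kap q (n+1)+2), by omega⟩
          rw [tailSeq_shift, show kap q (n+1) + 2 + i' = kap q (m+1) + 2 + i' by omega,
            tailSeq_shift]
          exact hag i' (by omega)
      · rw [tailSeq_shift]; exact hv1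
      · rw [show kap q (n+1) + 2 + r = kap q (m+1) + 2 + r by omega, tailSeq_shift]
        exact hv0
      · have hsplit : kap q (n+1) + 2 + r + 1 = (kap q (n+1) + 2) + (r + 1) := by omega
        rw [hsplit, Finset.sum_range_add]
        have hc : ∀ i ∈ Finset.range (r+1),
            ((tailSeq q (n+1) (kap q (n+1) + 2 + i) : ℕ)) = ((tailSeq q (n+1+1) i : ℕ)) :=
          fun i _ => by rw [tailSeq_shift]
        rw [Finset.sum_congr rfl hc, sum_two]
        exact even_two.add hev
    · exact base_case h0 h2 n m hn hm hlt heq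

/-- For irrational `q ∈ (0,1/2)` and `j ≥ 1`,
`1 0^{κ_j(q)} 11 0^{κ_{j+1}(q)} 11 ⋯ ≻ 1 0^{κ_1(q)-1} 11 0^{κ_2(q)} 11 ⋯` in the unimodal
order. -/
theorem stmt18 (q : ℝ) (h0 : 0 < q) (h2 : q < 1 / 2) (hirr : Irrational q)
    (j : ℕ) (hj : 1 ≤ j) :
    umLT (lowSeq q) (tailSeq q j) := by

  obtain ⟨hk1, hk1pos⟩ := kap_one_int h0 h2
  have caseA : kap q 1 ≤ kap q j → umLT (lowSeq q) (tailSeq q j) := by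
    intro hkk
    refine ⟨kap q 1, ?_, ?_, ?_⟩
    · intro i hi
      rcases Nat.eq_zero_or_pos i with rfl | ipos
      · rw [lowSeq_zero', tailSeq_zero']
      · rw [lowSeq_zeros q i ipos (by omega), tailSeq_zeros q j i ipos (by omega)]
    · rw [show kap q 1 = kap q 1 - 1 + 1 by omega]
      rw [lowSeq_one, tailSeq_zeros q j _ (by omega) (by omega)]
      exact one_ne_zero
    · rw [show kap q 1 + 1 = kap q 1 - 1 + 2 by omega, low_sum_two]
      exact even_two
  rcases Nat.lt_or_ge j 2 with hj1 | hj2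
  · have hj1' : j = 1 := by omega
    subst hj1'
    exact caseA le_rfl
  · obtain ⟨n', rfl⟩ : ∃ n', j = n' + 1 := ⟨j - 1, by omega⟩
    have hn' : 1 ≤ n' := by omega
    have e := kap_succ_int h0 h2 n' hn'
    have hθirr : Irrational (1/q) := by rw [one_div]; exact hirr.inv
    rcases wb_mem (1/q) n' with hw | hw
    · have hkj : kap q (n'+1) + 1 = kap q 1 := by omega
      have hF : Int.fract (((1:ℕ):ℝ)*(1/q)) < Int.fract ((↑(n'+1):ℝ)*(1/q)) := by
        have f2 := fract_succ_mul (1/q) n'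
        have hpos := fract_pos_of_irr (1/q) hθirr n' hn'
        have c2 : (↑(n'+1) : ℝ) = (n':ℝ)+1 := by push_cast; ring
        have c1 : (((1:ℕ):ℝ)) * (1/q) = ((1:ℝ)/q) := by norm_num
        rw [c1, c2, f2, hw]
        push_cast
        linarith
      obtain ⟨T, hT⟩ := exist_diff h0 h2 hirr 1 (n'+1) le_rfl (by omega) hF
      obtain ⟨r, hag, hv1, hv0, hev⟩ := main_lemma h0 h2 T 1 (n'+1) le_rfl (by omega) hF hT
      have hv1' : tailSeq q 2 r = 1 := hv1
      have hev' : Even (∑ i ∈ Finset.range (r + 1), ((tailSeq q 2 i : ℕ))) := hev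
      have hag' : ∀ i, i < r → tailSeq q 2 i = tailSeq q (n'+1+1) i := hag
      refine ⟨kap q 1 + 1 + r, ?_, ?_, ?_⟩
      · intro i hi
        rcases Nat.lt_or_ge i (kap q 1 + 1) with hsmall | hbig
        · rcases Nat.eq_zero_or_pos i with rfl | ipos
          · rw [lowSeq_zero', tailSeq_zero']
          · rcases Nat.lt_or_ge i (kap q 1) with h' | h'
            · rw [lowSeq_zeros q i ipos (by omega), tailSeq_zeros q (n'+1) i ipos (by omega)]
            · have hik : i = kap q 1 := by omega
              subst hik
              rw [show kap q 1 = kap q 1 - 1 + 1 by omega, lowSeq_one]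
              rw [show kap q 1 - 1 + 1 = kap q (n'+1) + 1 by omega, tailSeq_one]
        · obtain ⟨i', rfl⟩ : ∃ i', i = kap q 1 + 1 + i' := ⟨i - (kap q 1+1), by omega⟩
          rw [show kap q 1 + 1 + i' = kap q 1 - 1 + 2 + i' by omega, lowSeq_shift]
          rw [show kap q 1 - 1 + 2 + i' = kap q (n'+1) + 2 + i' by omega, tailSeq_shift]
          exact hag' i' (by omega)
      · rw [show kap q 1 + 1 + r = kap q 1 - 1 + 2 + r by omega, lowSeq_shift,
          show kap q 1 - 1 + 2 + r = kap q (n'+1) + 2 + r by omega, tailSeq_shift]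
        rw [hv1', hv0]
        exact one_ne_zero
      · rw [show kap q 1 + 1 + r + 1 = (kap q 1 + 1) + (r + 1) by omega, Finset.sum_range_add]
        have hc : ∀ i ∈ Finset.range (r+1),
            ((lowSeq q (kap q 1 + 1 + i) : ℕ)) = ((tailSeq q 2 i : ℕ)) :=
          fun i _ => by rw [show kap q 1 + 1 + i = kap q 1 - 1 + 2 + i by omega, lowSeq_shift]
        rw [Finset.sum_congr rfl hc, show kap q 1 + 1 = kap q 1 - 1 + 2 by omega, low_sum_two]
        exact even_two.add hev'
    · exact caseA (by omega)
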